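/- Let H ⊆ P = ∏_{n∈ℕ} ℤ and suppose d·e_0 ∈ H, where d is the minimum over nonzero h ∈ H of the gcd of the components of h, and e_0 is the first standard unit vector. Then every b ∈ H has b(0) divisible by d, and consequently H = ⟨d·e_0⟩ ⊕ H₁ where H₁ = {x ∈ H : x(0) = 0}. -/

import Mathlib

theorem stmt_7 (H : AddSubgroup (ℕ → ℤ)) (d : ℕ) (hd : 0 < d)
    (he : (Pi.single 0 (d : ℤ) : ℕ → ℤ) ∈ H)
    -- `d` is the minimum over the nonzero `h ∈ H` of the gcd of the components of `h` :
    (hmin : ∀ h ∈ H, h ≠ (0 : ℕ → ℤ) → ∀ g : ℕ,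
      ((∀ n, (g : ℤ) ∣ h n) ∧ ∀ m : ℕ, (∀ n, (m : ℤ) ∣ h n) → m ∣ g) → d ≤ g) :
    (∀ b ∈ H, (d : ℤ) ∣ b 0) ∧
      (AddSubgroup.closure {(Pi.single 0 (d : ℤ) : ℕ → ℤ)}) ⊔
          (H ⊓ (Pi.evalAddMonoidHom (fun _ : ℕ => ℤ) 0).ker) = H ∧
      (AddSubgroup.closure {(Pi.single 0 (d : ℤ) : ℕ → ℤ)}) ⊓
          (H ⊓ (Pi.evalAddMonoidHom (fun _ : ℕ => ℤ) 0).ker) = ⊥ := by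
  set e : ℕ → ℤ := (Pi.single 0 (d : ℤ) : ℕ → ℤ) with he0
  have he00 : e 0 = (d : ℤ) := by simp [he0]
  have key : ∀ b ∈ H, (d : ℤ) ∣ b 0 := by
    intro b hb
    by_contra hnd
    set q : ℤ := b 0 / (d : ℤ) with hq
    set h : ℕ → ℤ := b - q • e with hh
    have hhH : h ∈ H := H.sub_mem hb (AddSubgroup.zsmul_mem H he q)
    have hh0 : h 0 = b 0 % (d : ℤ) := by
      simp [hh, he00, Int.emod_def, mul_comm]
      exact Or.inl hq
    have hr0 : h 0 ≠ 0 := by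
      rw [hh0]
      intro hr
      exact hnd (Int.dvd_of_emod_eq_zero hr)
    have hne : h ≠ 0 := fun h0 => hr0 (by rw [h0]; rfl)
    obtain ⟨g, hg⟩ := Int.subgroup_cyclic (AddSubgroup.closure (Set.range h))
    have hgdvd : ∀ n, g ∣ h n := by
      intro n
      have : h n ∈ AddSubgroup.closure (Set.range h) :=
        AddSubgroup.subset_closure ⟨n, rfl⟩
      rw [hg, AddSubgroup.mem_closure_singleton] at this
      obtain ⟨k, hk⟩ := this
      exact ⟨k, by rw [← hk, smul_eq_mul]; ring⟩
    have hgmax : ∀ m : ℕ, (∀ n, (m : ℤ) ∣ h n) → (m : ℤ) ∣ g := by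
      intro m hm
      have hsub : AddSubgroup.closure (Set.range h) ≤ AddSubgroup.closure {(m : ℤ)} := by
        apply (AddSubgroup.closure_le _).2
        rintro x ⟨n, rfl⟩
        rw [SetLike.mem_coe, AddSubgroup.mem_closure_singleton]
        obtain ⟨k, hk⟩ := hm n
        exact ⟨k, by rw [hk, smul_eq_mul]; ring⟩
      have : g ∈ AddSubgroup.closure {(m : ℤ)} := by
        apply hsub
        rw [hg, AddSubgroup.mem_closure_singleton]
        exact ⟨1, one_smul _ _⟩
      rw [AddSubgroup.mem_closure_singleton] at this
      obtain ⟨k, hk⟩ := this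
      exact ⟨k, by rw [← hk, smul_eq_mul]; ring⟩
    have hdle : d ≤ g.natAbs := by
      apply hmin h hhH hne
      constructor
      · intro n
        exact (Int.natAbs_dvd).2 (hgdvd n)
      · intro m hm
        have := hgmax m hm
        exact Int.ofNat_dvd.mp ((Int.dvd_natAbs).2 this)
    -- g.natAbs divides h 0 = b 0 % d, which is positive and < d
    have hdv : (g.natAbs : ℤ) ∣ h 0 := (Int.natAbs_dvd).2 (hgdvd 0)
    have hpos : 0 < h 0 := by
      rw [hh0]
      rcases (Int.emod_nonneg (b 0) (by exact_mod_cast hd.ne' : (d:ℤ) ≠ 0)).lt_or_eq with h1 | h1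
      · exact h1
      · exact absurd h1.symm (by rw [hh0] at hr0; exact hr0)
    have hlt : h 0 < (d : ℤ) := by
      rw [hh0]
      exact Int.emod_lt_of_pos _ (by exact_mod_cast hd)
    have : (g.natAbs : ℤ) ≤ h 0 := Int.le_of_dvd hpos hdv
    have : (g.natAbs : ℤ) < (d : ℤ) := lt_of_le_of_lt this hlt
    omega
  refine ⟨key, ?_, ?_⟩
  · apply le_antisymm
    · apply sup_le
      · rw [AddSubgroup.closure_le]
        rintro x hx
        simp only [Set.mem_singleton_iff] at hx
        rw [hx]; exact he
      · exact inf_le_left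
    · intro b hb
      obtain ⟨k, hk⟩ := key b hb
      have h1 : k • e ∈ AddSubgroup.closure {e} :=
        AddSubgroup.zsmul_mem _ (AddSubgroup.subset_closure (Set.mem_singleton e)) k
      have h2 : b - k • e ∈ H ⊓ (Pi.evalAddMonoidHom (fun _ : ℕ => ℤ) 0).ker := by
        refine ⟨H.sub_mem hb (AddSubgroup.zsmul_mem H he k), ?_⟩
        simp [AddMonoidHom.mem_ker, Pi.evalAddMonoidHom_apply, he00, hk, mul_comm]
      have : k • e + (b - k • e) ∈ _ ⊔ _ :=
        AddSubgroup.add_mem_sup h1 h2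
      simpa using this
  · rw [eq_bot_iff]
    intro x hx
    rw [AddSubgroup.mem_inf, AddSubgroup.mem_inf] at hx
    obtain ⟨hx1, _, hx2⟩ := hx
    rw [AddSubgroup.mem_closure_singleton] at hx1
    obtain ⟨k, hk⟩ := hx1
    rw [AddMonoidHom.mem_ker] at hx2
    have hx0 : x 0 = 0 := hx2
    have : k * (d : ℤ) = 0 := by
      rw [← hx0, ← hk]
      simp [he00, mul_comm]
    have hk0 : k = 0 := by
      rcases mul_eq_zero.1 this with h | h
      · exact h
      · exact absurd h (by exact_mod_cast hd.ne')
    rw [AddSubgroup.mem_bot, ← hk, hk0, zero_smul]
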